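/- arXiv:1507.05592 — 2 statements merged into one kernel-verified Lean document; each statement's English description precedes it below -/
import Mathlib

section
/- Fix a positive integer k, and for each i ∈ {0,…,k} let a_i ∈ {-1,1}^k be any vector with exactly i coordinates equal to −1 (the value e_j(a_i) is independent of the choice since e_j is a symmetric polynomial). Then for all distinct j, j' ∈ {0,…,k}, ∑_{i=0}^{k} C(k,i)·e_j(a_i)·e_{j'}(a_i) = 0, where C(k,i) is the binomial coefficient. (Equivalently, the columns of the (k+1)×(k+1) matrix L·D̃_k are pairwise orthogonal, where D̃_k has (i,j) entry e_j(a_i) and L is the diagonal matrix with i-th diagonal entry √C(k,i).) -/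
/-- The `j`-th elementary symmetric polynomial in `k` variables:
`e_j(x) = ∑_{A ⊆ {1,…,k}, |A| = j} ∏_{i∈A} x_i`. -/
def esymm (k j : ℕ) (x : Fin k → ℤ) : ℤ :=
  ∑ A ∈ Finset.powersetCard j (Finset.univ : Finset (Fin k)), ∏ i ∈ A, x i

open Finset
open scoped symmDiff

/-- The sign vector attached to a finset. -/
def sgn {k : ℕ} (S : Finset (Fin k)) : Fin k → ℤ := fun t => if t ∈ S then -1 else 1

lemma esymm_sgn {k j : ℕ} (S : Finset (Fin k)) :
    esymm k j (sgn S) = ∑ A ∈ Finset.powersetCard j (Finset.univ : Finset (Fin k)),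
      (-1 : ℤ) ^ (A ∩ S).card := by
  unfold esymm sgn
  refine Finset.sum_congr rfl fun A _ => ?_
  rw [Finset.prod_ite, Finset.prod_const, Finset.prod_const, one_pow, mul_one]
  congr 1

/-- `esymm` is invariant under permutations of coordinates. -/
lemma esymm_comp_perm {k j : ℕ} (x : Fin k → ℤ) (σ : Equiv.Perm (Fin k)) :
    esymm k j (x ∘ σ) = esymm k j x := by
  unfold esymm
  refine Finset.sum_nbij' (fun A => A.image σ) (fun A => A.image σ.symm) ?_ ?_ ?_ ?_ ?_
  · intro A hA
    simp only [Finset.mem_powersetCard] at hA ⊢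
    exact ⟨Finset.subset_univ _, by rw [Finset.card_image_of_injective _ σ.injective, hA.2]⟩
  · intro A hA
    simp only [Finset.mem_powersetCard] at hA ⊢
    exact ⟨Finset.subset_univ _, by rw [Finset.card_image_of_injective _ σ.symm.injective, hA.2]⟩
  · intro A _
    ext t; simp [Finset.mem_image]
  · intro A _
    ext t; simp [Finset.mem_image]
  · intro A _
    rw [Finset.prod_image (fun a _ b _ h => σ.injective h)]
    simp

/-- There is a permutation carrying membership in `T` back to membership in `S`
whenever `S` and `T` have the same cardinality. -/
lemma exists_perm_mem_iff {k : ℕ} (S T : Finset (Fin k)) (h : S.card = T.card) :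
    ∃ σ : Equiv.Perm (Fin k), ∀ t, σ t ∈ T ↔ t ∈ S := by
  classical
  have hc : Sᶜ.card = Tᶜ.card := by
    rw [Finset.card_compl, Finset.card_compl, h]
  let e1 : {a : Fin k // a ∈ S} ≃ {a : Fin k // a ∈ T} := Finset.equivOfCardEq h
  let e2 : {a : Fin k // ¬ a ∈ S} ≃ {a : Fin k // ¬ a ∈ T} :=
    ((Equiv.subtypeEquivRight (fun a => by simp)).trans (Finset.equivOfCardEq hc)).trans
      (Equiv.subtypeEquivRight (fun a => by simp))
  refine ⟨((Equiv.sumCompl (· ∈ S)).symm.trans ((e1.sumCongr e2).trans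
    (Equiv.sumCompl (· ∈ T)))), fun t => ?_⟩
  by_cases ht : t ∈ S
  · simp only [Equiv.trans_apply, Equiv.sumCompl_symm_apply_of_pos ht,
      Equiv.sumCongr_apply, Sum.map_inl, Equiv.sumCompl_apply_inl]
    simpa [ht] using (e1 ⟨t, ht⟩).2
  · simp only [Equiv.trans_apply, Equiv.sumCompl_symm_apply_of_neg ht,
      Equiv.sumCongr_apply, Sum.map_inr, Equiv.sumCompl_apply_inr]
    simpa [ht] using (e2 ⟨t, ht⟩).2

lemma esymm_sgn_card_eq {k j : ℕ} (S T : Finset (Fin k)) (h : S.card = T.card) :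
    esymm k j (sgn S) = esymm k j (sgn T) := by
  obtain ⟨σ, hσ⟩ := exists_perm_mem_iff S T h
  have : sgn T ∘ σ = sgn S := by
    funext t; simp only [Function.comp, sgn, hσ t]
  rw [← this, esymm_comp_perm]

lemma sum_neg_one_pow_inter {k : ℕ} (T : Finset (Fin k)) (hT : T.Nonempty) :
    ∑ S ∈ (Finset.univ : Finset (Fin k)).powerset, (-1 : ℤ) ^ (T ∩ S).card = 0 := by
  classical
  obtain ⟨t₀, ht₀⟩ := hT
  refine Finset.sum_involution
    (fun S _ => if t₀ ∈ S then S.erase t₀ else insert t₀ S) ?_ ?_ ?_ ?_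
  · intro S _
    by_cases hS : t₀ ∈ S
    · simp only [if_pos hS]
      have : T ∩ S = insert t₀ (T ∩ S.erase t₀) := by
        ext x
        by_cases hx : x = t₀ <;> simp [hx, ht₀, hS, Finset.mem_erase]
      rw [this, Finset.card_insert_of_notMem (by simp), pow_succ]
      ring
    · simp only [if_neg hS]
      have : T ∩ insert t₀ S = insert t₀ (T ∩ S) := by
        ext x
        by_cases hx : x = t₀ <;> simp [hx, ht₀]
      rw [this, Finset.card_insert_of_notMem (by simp [hS]), pow_succ]
      ring
  · intro S _ _
    by_cases hS : t₀ ∈ S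
    · simp only [if_pos hS]
      intro hEq; exact (hEq ▸ Finset.notMem_erase t₀ S) hS
    · simp only [if_neg hS]
      intro hEq; exact hS (hEq ▸ Finset.mem_insert_self t₀ S)
  · intro S _
    simp
  · intro S _
    by_cases hS : t₀ ∈ S
    · simp [hS, Finset.insert_erase hS]
    · simp [hS, Finset.erase_insert hS]

lemma sum_sgn_prod {k : ℕ} (j j' : ℕ) (hjj' : j ≠ j') :
    ∑ S ∈ (Finset.univ : Finset (Fin k)).powerset,
      esymm k j (sgn S) * esymm k j' (sgn S) = 0 := by
  classical
  simp_rw [esymm_sgn, Finset.sum_mul_sum, ← pow_add]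
  rw [Finset.sum_comm]
  refine Finset.sum_eq_zero fun A hA => ?_
  rw [Finset.sum_comm]
  refine Finset.sum_eq_zero fun B hB => ?_
  rw [Finset.mem_powersetCard] at hA hB
  have hne : A ≠ B := fun h => hjj' (by rw [← hA.2, ← hB.2, h])
  have hTne : (A ∆ B).Nonempty := Finset.symmDiff_nonempty.2 hne
  have key : ∀ S : Finset (Fin k),
      (-1 : ℤ) ^ ((A ∩ S).card + (B ∩ S).card) = (-1 : ℤ) ^ ((A ∆ B ∩ S).card) := by
    intro S
    have hdist : A ∆ B ∩ S = (A ∩ S) ∆ (B ∩ S) := by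
      ext x; simp [Finset.mem_symmDiff]; tauto
    have hcard : (A ∩ S).card + (B ∩ S).card
        = ((A ∩ S) ∆ (B ∩ S)).card + 2 * ((A ∩ S) ∩ (B ∩ S)).card := by
      have h1 : ((A ∩ S) ∆ (B ∩ S)).card + ((A ∩ S) ∩ (B ∩ S)).card
          = ((A ∩ S) ∪ (B ∩ S)).card := by
        rw [← Finset.card_union_of_disjoint]
        · congr 1
          ext x; simp [Finset.mem_symmDiff]; tauto
        · rw [Finset.disjoint_left]
          intro x hx hx'
          simp only [Finset.mem_symmDiff, Finset.mem_inter] at hx hx'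
          tauto
      have h2 := Finset.card_union_add_card_inter (A ∩ S) (B ∩ S)
      omega
    rw [hcard, hdist, pow_add, pow_mul]
    simp
  calc ∑ S ∈ (Finset.univ : Finset (Fin k)).powerset,
        (-1 : ℤ) ^ ((A ∩ S).card + (B ∩ S).card)
      = ∑ S ∈ (Finset.univ : Finset (Fin k)).powerset,
        (-1 : ℤ) ^ ((A ∆ B ∩ S).card) := Finset.sum_congr rfl fun S _ => key S
    _ = 0 := sum_neg_one_pow_inter _ hTne

/-- Fix a positive integer `k`, and for each `i ∈ {0,…,k}` let
`a i ∈ {-1,1}^k` be any vector with exactly `i` coordinates equal to `−1`.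
Then for all distinct `j, j' ∈ {0,…,k}`,
`∑_{i=0}^{k} C(k,i)·e_j(a i)·e_{j'}(a i) = 0`. -/
theorem stmt_2 (k : ℕ) (hk : 0 < k) (a : ℕ → Fin k → ℤ)
    (ha1 : ∀ i ≤ k, ∀ t, a i t = 1 ∨ a i t = -1)
    (ha2 : ∀ i ≤ k, (Finset.univ.filter fun t => a i t = -1).card = i)
    (j j' : ℕ) (hj : j ≤ k) (hj' : j' ≤ k) (hjj' : j ≠ j') :
    ∑ i ∈ Finset.range (k + 1),
      (k.choose i : ℤ) * esymm k j (a i) * esymm k j' (a i) = 0 := by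
  classical
  -- `a i` equals `sgn Sᵢ` where `Sᵢ` is the set of `-1` coordinates.
  have ha : ∀ i ≤ k, a i = sgn (Finset.univ.filter fun t => a i t = -1) := by
    intro i hi
    funext t
    rcases ha1 i hi t with h | h <;> simp [sgn, h]
  have hcard : ∀ i ≤ k, (Finset.univ.filter fun t => a i t = -1).card = i := ha2
  have key := sum_sgn_prod (k := k) j j' hjj'
  rw [Finset.sum_powerset] at key
  have hcu : (Finset.univ : Finset (Fin k)).card = k := by simp
  rw [hcu] at key
  rw [← key]
  refine Finset.sum_congr rfl fun i hi => ?_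
  rw [Finset.mem_range] at hi
  have hik : i ≤ k := Nat.lt_succ_iff.mp hi
  set Si := Finset.univ.filter fun t => a i t = -1 with hSi
  have hSicard : Si.card = i := hcard i hik
  have : ∀ S ∈ Finset.powersetCard i (Finset.univ : Finset (Fin k)),
      esymm k j (sgn S) * esymm k j' (sgn S)
        = esymm k j (a i) * esymm k j' (a i) := by
    intro S hS
    rw [Finset.mem_powersetCard] at hS
    rw [ha i hik, esymm_sgn_card_eq S Si (by rw [hS.2, hSicard]),
      esymm_sgn_card_eq S Si (by rw [hS.2, hSicard])]
  rw [Finset.sum_congr rfl this, Finset.sum_const, Finset.card_powersetCard, hcu,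
    nsmul_eq_mul, mul_assoc]
end

section
/- Fix a positive integer k. For each j ∈ {0,…,k}, let r_j = (∑_{t=0}^{k} C(k,t)·e_j(a_t)²)^{-1/2}, where a_t ∈ {-1,1}^k is any vector with exactly t coordinates equal to −1 (this sum is strictly positive, e.g. because e_j(1,…,1) = C(k,j) > 0). Then the real (k+1)×(k+1) matrix M with entries M_{i,j} = √C(k,i)·e_j(a_i)·r_j is an orthogonal matrix, i.e., Mᵀ·M = I. (This is the 'Squashed QFT' matrix L·D̃_k·R.) -/
/-- The `j`-th elementary symmetric polynomial in `k` real variables: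
`e_j(x) = ∑_{A ⊆ {1,…,k}, |A| = j} ∏_{i∈A} x_i`. -/
def esymmR (k j : ℕ) (x : Fin k → ℝ) : ℝ :=
  ∑ A ∈ Finset.powersetCard j (Finset.univ : Finset (Fin k)), ∏ i ∈ A, x i

namespace Stmt4Aux

open Finset

variable {k : ℕ}

/-- The ±1 vector indicated by a finset (−1 on `s`). -/
def chi (s : Finset (Fin k)) (i : Fin k) : ℝ := if i ∈ s then -1 else 1

lemma prod_chi (A s : Finset (Fin k)) :
    ∏ i ∈ A, chi s i = ∏ i ∈ s, (if i ∈ A then (-1:ℝ) else 1) := by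
  unfold chi
  rw [Finset.prod_ite, Finset.prod_const_one, mul_one, Finset.prod_const,
      Finset.prod_ite, Finset.prod_const_one, mul_one, Finset.prod_const,
      Finset.filter_mem_eq_inter, Finset.filter_mem_eq_inter, Finset.inter_comm]

lemma sum_powerset_prod (G : Fin k → ℝ) :
    ∑ s ∈ (univ : Finset (Fin k)).powerset, ∏ i ∈ s, G i = ∏ i, (G i + 1) := by
  rw [Finset.prod_add]
  simp

lemma esymm_comp_equiv (j : ℕ) (x : Fin k → ℝ) (σ : Equiv.Perm (Fin k)) :
    esymmR k j (fun i => x (σ i)) = esymmR k j x := by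
  unfold esymmR
  have h1 : ∀ A ∈ powersetCard j (univ : Finset (Fin k)),
      ∏ i ∈ A, x (σ i) = ∏ i ∈ A.map σ.toEmbedding, x i := by
    intro A _
    rw [Finset.prod_map]
    rfl
  rw [Finset.sum_congr rfl h1]
  conv_rhs => rw [← Finset.map_univ_equiv σ, Finset.powersetCard_map, Finset.sum_map]
  refine Finset.sum_congr rfl fun A _ => ?_
  rfl

lemma exists_perm {s s' : Finset (Fin k)} (h : s.card = s'.card) :
    ∃ σ : Equiv.Perm (Fin k), ∀ i, σ i ∈ s' ↔ i ∈ s := by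
  classical
  have h1 : Fintype.card {x : Fin k // x ∈ s} = Fintype.card {x : Fin k // x ∈ s'} := by
    simp [Fintype.card_coe, h]
  have h2 : Fintype.card {x : Fin k // ¬ x ∈ s} = Fintype.card {x : Fin k // ¬ x ∈ s'} := by
    rw [Fintype.card_subtype_compl, Fintype.card_subtype_compl, h1]
  let e1 := Fintype.equivOfCardEq h1
  let e2 := Fintype.equivOfCardEq h2
  refine ⟨(Equiv.sumCompl (· ∈ s)).symm.trans ((e1.sumCongr e2).trans
    (Equiv.sumCompl (· ∈ s'))), fun i => ?_⟩
  by_cases hi : i ∈ s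
  · simp [Equiv.sumCompl_symm_apply_of_pos hi, hi, (e1 ⟨i, hi⟩).2]
  · simp [Equiv.sumCompl_symm_apply_of_neg hi, hi, (e2 ⟨i, hi⟩).2]

lemma esymm_chi_card (j : ℕ) {s s' : Finset (Fin k)} (h : s.card = s'.card) :
    esymmR k j (chi s) = esymmR k j (chi s') := by
  obtain ⟨σ, hσ⟩ := exists_perm h
  have : chi s = fun i => chi s' (σ i) := by
    funext i
    simp only [chi, hσ i]
  rw [this, esymm_comp_equiv]

lemma GAB (A B : Finset (Fin k)) :
    ∏ i, (((if i ∈ A then (-1:ℝ) else 1) * (if i ∈ B then (-1:ℝ) else 1)) + 1)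
      = if A = B then (2:ℝ)^k else 0 := by
  by_cases hAB : A = B
  · subst hAB
    rw [if_pos rfl]
    have : ∀ i ∈ (univ : Finset (Fin k)),
        ((if i ∈ A then (-1:ℝ) else 1) * (if i ∈ A then (-1:ℝ) else 1)) + 1 = 2 := by
      intro i _
      by_cases h : i ∈ A <;> simp [h] <;> norm_num
    rw [Finset.prod_congr rfl this, Finset.prod_const, card_univ, Fintype.card_fin]
  · rw [if_neg hAB]
    obtain ⟨i₀, hi₀⟩ : ∃ i, ¬ (i ∈ A ↔ i ∈ B) := by
      by_contra hc
      push_neg at hc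
      exact hAB (Finset.ext fun i => hc i)
    apply Finset.prod_eq_zero (mem_univ i₀)
    by_cases h1 : i₀ ∈ A <;> by_cases h2 : i₀ ∈ B <;> simp [h1, h2] at hi₀ ⊢

lemma key (j j' : ℕ) :
    ∑ s ∈ (univ : Finset (Fin k)).powerset, esymmR k j (chi s) * esymmR k j' (chi s)
      = if j = j' then (2:ℝ)^k * (k.choose j : ℝ) else 0 := by
  have hterm : ∀ s ∈ (univ : Finset (Fin k)).powerset,
      esymmR k j (chi s) * esymmR k j' (chi s)
      = ∑ A ∈ powersetCard j (univ : Finset (Fin k)),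
          ∑ B ∈ powersetCard j' (univ : Finset (Fin k)),
          ∏ i ∈ s, ((if i ∈ A then (-1:ℝ) else 1) * (if i ∈ B then (-1:ℝ) else 1)) := by
    intro s _
    unfold esymmR
    rw [Finset.sum_mul_sum]
    refine Finset.sum_congr rfl fun A _ => Finset.sum_congr rfl fun B _ => ?_
    rw [prod_chi A s, prod_chi B s, ← Finset.prod_mul_distrib]
  rw [Finset.sum_congr rfl hterm, Finset.sum_comm]
  have : ∀ A ∈ powersetCard j (univ : Finset (Fin k)),
      (∑ s ∈ (univ : Finset (Fin k)).powerset, ∑ B ∈ powersetCard j' (univ : Finset (Fin k)),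
        ∏ i ∈ s, ((if i ∈ A then (-1:ℝ) else 1) * (if i ∈ B then (-1:ℝ) else 1)))
      = if j = j' then (2:ℝ)^k else 0 := by
    intro A hA
    rw [Finset.sum_comm]
    have hB : ∀ B ∈ powersetCard j' (univ : Finset (Fin k)),
        (∑ s ∈ (univ : Finset (Fin k)).powerset,
          ∏ i ∈ s, ((if i ∈ A then (-1:ℝ) else 1) * (if i ∈ B then (-1:ℝ) else 1)))
        = if A = B then (2:ℝ)^k else 0 := by
      intro B _
      rw [sum_powerset_prod, GAB]
    rw [Finset.sum_congr rfl hB, Finset.sum_ite_eq (powersetCard j' univ) A (fun _ => (2:ℝ)^k)]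
    rw [Finset.mem_powersetCard_univ] at hA
    by_cases hjj : j = j'
    · rw [if_pos hjj, if_pos]
      rw [Finset.mem_powersetCard_univ, hA, hjj]
    · rw [if_neg hjj, if_neg]
      rw [Finset.mem_powersetCard_univ, hA]
      exact hjj
  rw [Finset.sum_congr rfl this, Finset.sum_const, Finset.card_powersetCard, card_univ,
    Fintype.card_fin]
  by_cases hjj : j = j' <;> simp [hjj, mul_comm]

end Stmt4Aux

namespace Stmt4Aux

lemma counting {k : ℕ} (a : ℕ → Fin k → ℝ)
    (ha1 : ∀ i ≤ k, ∀ t, a i t = 1 ∨ a i t = -1)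
    (ha2 : ∀ i ≤ k, (Finset.univ.filter fun t => a i t = -1).card = i)
    (j j' : ℕ) :
    ∑ t ∈ Finset.range (k + 1), (k.choose t : ℝ) * (esymmR k j (a t) * esymmR k j' (a t))
      = if j = j' then (2:ℝ)^k * (k.choose j : ℝ) else 0 := by
  classical
  have hkey := key (k := k) j j'
  rw [Finset.sum_powerset] at hkey
  simp only [Finset.card_univ, Fintype.card_fin] at hkey
  rw [← hkey]
  refine Finset.sum_congr rfl fun t ht => ?_
  have ht' : t ≤ k := Nat.lt_succ_iff.mp (Finset.mem_range.mp ht)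
  set st := Finset.univ.filter (fun i => a t i = -1) with hst
  have hcard : st.card = t := ha2 t ht'
  have hat : a t = chi st := by
    funext i
    rcases ha1 t ht' i with h | h
    · have hni : i ∉ st := by simp [hst, h]; norm_num
      simp [chi, hni, h]
    · have hii : i ∈ st := by simp [hst, h]
      simp [chi, hii, h]
  have hcong : ∀ s ∈ Finset.powersetCard t (Finset.univ : Finset (Fin k)),
      esymmR k j (chi s) * esymmR k j' (chi s)
        = esymmR k j (a t) * esymmR k j' (a t) := by
    intro s hs
    have hsc : s.card = st.card := by
      rw [hcard]
      exact Finset.mem_powersetCard_univ.mp hs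
    rw [hat, esymm_chi_card j hsc, esymm_chi_card j' hsc]
  rw [Finset.sum_congr rfl hcong, Finset.sum_const, Finset.card_powersetCard,
    Finset.card_univ, Fintype.card_fin, nsmul_eq_mul]

end Stmt4Aux


/-- Fix a positive integer `k`.  For each `i ∈ {0,…,k}` let
`a i ∈ {-1,1}^k` be a vector with exactly `i` coordinates equal to `−1`, and for
`j ∈ {0,…,k}` let `r j = (∑_{t=0}^{k} C(k,t)·e_j(a t)²)^{-1/2}`.  Then the real
`(k+1)×(k+1)` matrix `M` with entries `M i j = √C(k,i)·e_j(a i)·r j` is an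
orthogonal matrix, i.e. `Mᵀ·M = I`. -/
theorem stmt_4 (k : ℕ) (hk : 0 < k) (a : ℕ → Fin k → ℝ)
    (ha1 : ∀ i ≤ k, ∀ t, a i t = 1 ∨ a i t = -1)
    (ha2 : ∀ i ≤ k, (Finset.univ.filter fun t => a i t = -1).card = i)
    (r : ℕ → ℝ)
    (hr : ∀ j, r j =
      (Real.sqrt (∑ t ∈ Finset.range (k + 1),
        (k.choose t : ℝ) * (esymmR k j (a t)) ^ 2))⁻¹)
    (M : Matrix (Fin (k + 1)) (Fin (k + 1)) ℝ)
    (hM : ∀ i j, M i j =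
      Real.sqrt (k.choose (i : ℕ) : ℝ) * esymmR k (j : ℕ) (a (i : ℕ)) * r (j : ℕ)) :
    M.transpose * M = 1 := by
  ext j j'
  have entry : (M.transpose * M) j j' =
      (if (j : ℕ) = (j' : ℕ) then (2:ℝ)^k * (k.choose (j:ℕ) : ℝ) else 0) * (r (j:ℕ) * r (j':ℕ)) := by
    rw [Matrix.mul_apply]
    simp only [Matrix.transpose_apply, hM]
    rw [Fin.sum_univ_eq_sum_range (fun t =>
      (Real.sqrt (k.choose t : ℝ) * esymmR k (j:ℕ) (a t) * r (j:ℕ)) *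
      (Real.sqrt (k.choose t : ℝ) * esymmR k (j':ℕ) (a t) * r (j':ℕ)))]
    rw [← Stmt4Aux.counting a ha1 ha2 (j:ℕ) (j':ℕ), Finset.sum_mul]
    refine Finset.sum_congr rfl fun t _ => ?_
    have h : Real.sqrt (k.choose t : ℝ) * Real.sqrt (k.choose t : ℝ) = (k.choose t : ℝ) :=
      Real.mul_self_sqrt (Nat.cast_nonneg _)
    ring_nf
    linear_combination (esymmR k (j:ℕ) (a t) * esymmR k (j':ℕ) (a t) * r (j:ℕ) * r (j':ℕ)) * h
  rw [entry]
  by_cases hjj : j = j'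
  · subst hjj
    rw [Matrix.one_apply_eq, if_pos rfl]
    have hS : (∑ t ∈ Finset.range (k + 1), (k.choose t : ℝ) * (esymmR k (j:ℕ) (a t)) ^ 2)
        = (2:ℝ)^k * (k.choose (j:ℕ) : ℝ) := by
      have := Stmt4Aux.counting a ha1 ha2 (j:ℕ) (j:ℕ)
      simpa [sq] using this
    have hpos : (0:ℝ) < (2:ℝ)^k * (k.choose (j:ℕ) : ℝ) := by
      have h1 : 0 < k.choose (j:ℕ) := Nat.choose_pos (Fin.is_le j)
      positivity
    rw [hr, hS, ← mul_inv, Real.mul_self_sqrt hpos.le, mul_inv_cancel₀ (ne_of_gt hpos)]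
  · rw [Matrix.one_apply_ne hjj, if_neg (fun h => hjj (Fin.ext h)), zero_mul]
end
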